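/- Let K be a field and S_1 = K⟨x, y | yx = 1⟩. Then the element x - 1 is a regular element of S_1, i.e. left multiplication and right multiplication by x - 1 are both injective maps S_1 → S_1. -/

import Mathlib

/-- Defining relation `y * x = 1` for the algebra of one-sided inverses `S₁(R)`. -/
inductive S1Rel (R : Type) [CommRing R] : FreeAlgebra R Bool → FreeAlgebra R Bool → Prop
  | rel : S1Rel R (FreeAlgebra.ι R false * FreeAlgebra.ι R true) 1

/-- `S₁(R) = R⟨x, y | yx = 1⟩`, the algebra of one-sided inverses of `R[x]`. -/
abbrev S1 (R : Type) [CommRing R] := RingQuot (S1Rel R)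

/-- The generator `x` of `S₁(R)`. -/
noncomputable def S1.x (R : Type) [CommRing R] : S1 R :=
  RingQuot.mkRingHom (S1Rel R) (FreeAlgebra.ι R true)

/-- The generator `y` of `S₁(R)`. -/
noncomputable def S1.y (R : Type) [CommRing R] : S1 R :=
  RingQuot.mkRingHom (S1Rel R) (FreeAlgebra.ι R false)


theorem S1.yx (R : Type) [CommRing R] : S1.y R * S1.x R = 1 := by
  have := RingQuot.mkRingHom_rel (S1Rel.rel (R := R))
  simpa [S1.x, S1.y] using this

/-- The `ℤ`-grading coaction `x ↦ x·t`, `y ↦ y·t⁻¹` into the Laurent polynomials over `S₁`. -/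
noncomputable def S1.delta (K : Type) [Field K] : S1 K →ₐ[K] AddMonoidAlgebra (S1 K) ℤ := by
  set_option maxRecDepth 4000 in
  exact
  RingQuot.liftAlgHom K ⟨FreeAlgebra.lift K (fun b =>
      AddMonoidAlgebra.single (if b then 1 else -1) (if b then S1.x K else S1.y K)), by
    rintro _ _ ⟨⟩
    simp only [map_mul, map_one, FreeAlgebra.lift_ι_apply, if_true, Bool.false_eq_true, if_false,
      AddMonoidAlgebra.single_mul_single, neg_add_cancel, S1.yx, AddMonoidAlgebra.one_def]⟩

/-- The evaluation `t ↦ 1`, a retraction of `S1.delta`. -/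
noncomputable def S1.eps (K : Type) [Field K] : AddMonoidAlgebra (S1 K) ℤ →ₐ[K] S1 K :=
  AddMonoidAlgebra.liftNCAlgHom (AlgHom.id K (S1 K)) 1 (fun _ _ => by simp)

theorem S1.eps_single (K : Type) [Field K] (n : ℤ) (a : S1 K) :
    S1.eps K (AddMonoidAlgebra.single n a) = a := by
  simp only [S1.eps, AddMonoidAlgebra.liftNCAlgHom, AddMonoidAlgebra.liftNCRingHom]
  show AddMonoidAlgebra.liftNC _ _ _ = a
  rw [AddMonoidAlgebra.liftNC_single]
  simp

theorem S1.x_eq (K : Type) [Field K] :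
    S1.x K = RingQuot.mkAlgHom K (S1Rel K) (FreeAlgebra.ι K true) := by
  rw [S1.x, ← RingQuot.mkAlgHom_coe K]; rfl

theorem S1.y_eq (K : Type) [Field K] :
    S1.y K = RingQuot.mkAlgHom K (S1Rel K) (FreeAlgebra.ι K false) := by
  rw [S1.y, ← RingQuot.mkAlgHom_coe K]; rfl

theorem S1.delta_x (K : Type) [Field K] :
    S1.delta K (S1.x K) = AddMonoidAlgebra.single 1 (S1.x K) := by
  conv_lhs => rw [S1.x_eq, S1.delta, RingQuot.liftAlgHom_mkAlgHom_apply, FreeAlgebra.lift_ι_apply]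
  norm_num

theorem S1.eps_delta (K : Type) [Field K] (a : S1 K) : S1.eps K (S1.delta K a) = a := by
  have h : (S1.eps K).comp (S1.delta K) = AlgHom.id K (S1 K) := by
    ext b
    simp only [AlgHom.coe_comp, Function.comp_apply, AlgHom.id_apply]
    rw [S1.delta, RingQuot.liftAlgHom_mkAlgHom_apply, FreeAlgebra.lift_ι_apply]
    cases b
    · rw [if_neg (by simp), if_neg (by simp), S1.eps_single, S1.y_eq]
    · rw [if_pos rfl, if_pos rfl, S1.eps_single, S1.x_eq]
  exact DFunLike.congr_fun h a

/-- Key lemma on the lowest degree: a nonzero Laurent polynomial is not fixed by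
multiplication (on either side) by `single 1 r`. -/
theorem S1.key {R : Type} [Ring R] (p : AddMonoidAlgebra R ℤ) (hp : p ≠ 0) (r : R) :
    AddMonoidAlgebra.single 1 r * p ≠ p ∧ p * AddMonoidAlgebra.single 1 r ≠ p := by
  have hs : p.coeff.support.Nonempty := Finsupp.support_nonempty_iff.mpr (by simpa using hp)
  set d := p.coeff.support.min' hs with hd
  have hdmem : d ∈ p.coeff.support := p.coeff.support.min'_mem hs
  have hd1 : p.coeff (d - 1) = 0 := by
    by_contra h
    have : d - 1 ∈ p.coeff.support := Finsupp.mem_support_iff.mpr h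
    have := p.coeff.support.min'_le _ this
    omega
  have hpd : p.coeff d ≠ 0 := Finsupp.mem_support_iff.mp hdmem
  constructor
  · intro h
    have := congrArg (fun q : AddMonoidAlgebra R ℤ => q.coeff d) h
    simp only [AddMonoidAlgebra.coeff_single_mul_apply] at this
    rw [show -1 + d = d - 1 by ring, hd1, mul_zero] at this
    exact hpd this.symm
  · intro h
    have := congrArg (fun q : AddMonoidAlgebra R ℤ => q.coeff d) h
    simp only [AddMonoidAlgebra.coeff_mul_single_apply] at this
    rw [← sub_eq_add_neg, hd1, zero_mul] at this
    exact hpd this.symm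


/-- Let `K` be a field and `S₁ = K⟨x, y | yx = 1⟩`. Then `x - 1` is a regular element of
`S₁`: left and right multiplication by `x - 1` are injective. -/
theorem S1.x_sub_one_regular (K : Type) [Field K] :
    Function.Injective (fun a : S1 K => (S1.x K - 1) * a) ∧
    Function.Injective (fun a : S1 K => a * (S1.x K - 1)) := by
  have main : ∀ a : S1 K, a ≠ 0 →
      (S1.x K - 1) * a ≠ 0 ∧ a * (S1.x K - 1) ≠ 0 := by
    intro a ha
    have hp : S1.delta K a ≠ 0 := fun h => ha (by rw [← S1.eps_delta K a, h, map_zero])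
    obtain ⟨h1, h2⟩ := S1.key (S1.delta K a) hp (S1.x K)
    constructor
    · intro h
      apply h1
      rw [sub_mul, one_mul, sub_eq_zero] at h
      have := congrArg (S1.delta K) h
      rwa [map_mul, S1.delta_x] at this
    · intro h
      apply h2
      rw [mul_sub, mul_one, sub_eq_zero] at h
      have := congrArg (S1.delta K) h
      rwa [map_mul, S1.delta_x] at this
  constructor
  · intro a b hab
    by_contra hne
    have : (S1.x K - 1) * (a - b) = 0 := by
      rw [mul_sub]; simpa [sub_eq_zero] using hab
    exact ((main (a - b) (sub_ne_zero.mpr hne)).1) this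
  · intro a b hab
    by_contra hne
    have : (a - b) * (S1.x K - 1) = 0 := by
      rw [sub_mul]; simpa [sub_eq_zero] using hab
    exact ((main (a - b) (sub_ne_zero.mpr hne)).2) this
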